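/- Let σ be an inversion sequence of size n ≥ 1 avoiding 010 and 102 which does not contain the value 1, and let z = |Zeros(σ)|. Then the set of positions i ∈ [2, n+1] at which inserting the value 1 yields an inversion sequence of size n+1 avoiding 010 and 102 equals { i ∈ [z+1, n+1] : min of (σ_j)_{j∈[z+1,i−1]} ≥ max of (σ_j)_{j∈[i,n]} } (with min over an empty range equal to +∞ and max over an empty range equal to −∞). -/

import Mathlib

/-- `l` is an inversion sequence (0-indexed: entry `i` is at most `i`). -/
def IsInvL (l : List ℕ) : Prop := ∀ i (h : i < l.length), l.get ⟨i, h⟩ ≤ i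

def C010 (l : List ℕ) : Prop :=
  ∃ i j k, i < j ∧ j < k ∧ k < l.length ∧
    l.getD i 0 = l.getD k 0 ∧ l.getD k 0 < l.getD j 0

def C102 (l : List ℕ) : Prop :=
  ∃ i j k, i < j ∧ j < k ∧ k < l.length ∧
    l.getD j 0 < l.getD i 0 ∧ l.getD i 0 < l.getD k 0

lemma getD_lt' (l : List ℕ) (n : ℕ) (h : n < l.length) : l.getD n 0 = l[n] := by
  simp [List.getD_eq_getElem?_getD, List.getElem?_eq_getElem h]

lemma count_zero_iff' (l : List ℕ)
    (hdc : ∀ j k, j < k → k < l.length → l.getD k 0 = 0 → l.getD j 0 = 0) :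
    ∀ m, m < l.length → (l.getD m 0 = 0 ↔ m < l.count 0) := by
  induction l with
  | nil => intro m hm; simp at hm
  | cons a t ih =>
    have hdc' : ∀ j k, j < k → k < t.length → t.getD k 0 = 0 → t.getD j 0 = 0 := by
      intro j k hjk hk h0
      exact hdc (j+1) (k+1) (by omega) (by simp; omega) h0
    intro m hm
    by_cases ha : a = 0
    · subst ha
      cases m with
      | zero => simp [List.count_cons]
      | succ m' =>
        simp only [List.getD_cons_succ]
        rw [ih hdc' m' (by simpa using hm)]
        simp [List.count_cons]
    · have hnz : ∀ k, k < t.length → t.getD k 0 ≠ 0 := by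
        intro k hk h0
        exact ha (hdc 0 (k+1) (Nat.succ_pos k) (by simp; omega) h0)
      have hcount : (a :: t).count 0 = 0 := by
        rw [List.count_eq_zero]
        intro hmem
        rcases List.mem_cons.mp hmem with h | h
        · exact ha h.symm
        · obtain ⟨k, hk, hk0⟩ := List.mem_iff_getElem.mp h
          exact hnz k hk (by rw [getD_lt' t k hk]; exact hk0)
      rw [hcount]
      cases m with
      | zero => simpa using ha
      | succ m' =>
        simp only [List.getD_cons_succ]
        constructor
        · intro h0; exact absurd h0 (hnz m' (by simpa using hm))
        · omega

theorem active_sites_characterization (l : List ℕ) (hinv : IsInvL l)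
    (hne : 1 ≤ l.length) (h010 : ¬ C010 l) (h102 : ¬ C102 l)
    (h1 : ∀ x ∈ l, x ≠ 1)
    (p : ℕ) (hp1 : 1 ≤ p) (hp2 : p ≤ l.length) :
    (IsInvL (l.insertIdx p 1) ∧ ¬ C010 (l.insertIdx p 1) ∧
        ¬ C102 (l.insertIdx p 1)) ↔
      (l.count 0 ≤ p ∧ ∀ a b, l.count 0 ≤ a → a < p → p ≤ b → b < l.length →
        l.getD b 0 ≤ l.getD a 0) := by
  set n := l.length with hn
  set z := l.count 0 with hzdef
  have hlen : (l.insertIdx p 1).length = n + 1 := List.length_insertIdx_of_le_length hp2 1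
  have hinvD : ∀ i, i < n → l.getD i 0 ≤ i := by
    intro i hi; rw [getD_lt' l i hi]; simpa using hinv i hi
  have hl0 : l.getD 0 0 = 0 := Nat.le_zero.mp (hinvD 0 hne)
  have hdc : ∀ j k, j < k → k < n → l.getD k 0 = 0 → l.getD j 0 = 0 := by
    intro j k hjk hk h0
    by_contra hj
    rcases Nat.eq_zero_or_pos j with rfl | hjpos
    · exact hj hl0
    · exact h010 ⟨0, j, k, hjpos, hjk, hk, hl0.trans h0.symm, by omega⟩
  have hziff := count_zero_iff' l hdc
  have hzn : z ≤ n := List.count_le_length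
  have hz0 : 1 ≤ z := (hziff 0 hne).mp hl0
  have hz1 : ∀ m, m < z → l.getD m 0 = 0 := fun m hm => (hziff m (by omega)).mpr hm
  have hz2 : ∀ m, z ≤ m → m < n → 2 ≤ l.getD m 0 := by
    intro m hm1 hm2
    have h0 : l.getD m 0 ≠ 0 := fun h => by have := (hziff m hm2).mp h; omega
    have hne1 : l.getD m 0 ≠ 1 := by
      rw [getD_lt' l m hm2]; exact h1 _ (List.getElem_mem hm2)
    omega
  have hne1 : ∀ m, m < n → l.getD m 0 ≠ 1 := by
    intro m hm; rw [getD_lt' l m hm]; exact h1 _ (List.getElem_mem hm)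
  have g1 : ∀ i, i < p → (l.insertIdx p 1).getD i 0 = l.getD i 0 := by
    intro i hi
    rw [getD_lt' (l.insertIdx p 1) i (by omega), getD_lt' l i (by omega)]
    exact List.getElem_insertIdx_of_lt hi (by omega)
  have g2 : (l.insertIdx p 1).getD p 0 = 1 := by
    rw [getD_lt' (l.insertIdx p 1) p (by omega)]
    exact List.getElem_insertIdx_self (by omega)
  have g3 : ∀ i, p < i → i < n + 1 → (l.insertIdx p 1).getD i 0 = l.getD (i-1) 0 := by
    intro i hpi hin
    obtain ⟨k, rfl⟩ : ∃ k, i = p + k + 1 := ⟨i - p - 1, by omega⟩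
    rw [getD_lt' (l.insertIdx p 1) (p + k + 1) (by omega),
      getD_lt' l (p + k + 1 - 1) (by omega)]
    have := List.getElem_insertIdx_add_succ l 1 p k (by omega) (by omega)
    rw [this]
    congr 1
  have hinv' : IsInvL (l.insertIdx p 1) := by
    intro i h
    rw [List.get_eq_getElem, ← getD_lt' (l.insertIdx p 1) i h]
    rw [hlen] at h
    rcases lt_trichotomy i p with hip | rfl | hpi
    · rw [g1 i hip]; exact hinvD i (by omega)
    · rw [g2]; omega
    · rw [g3 i hpi h]; have := hinvD (i-1) (by omega); omega
  constructor
  · rintro ⟨-, h010', h102'⟩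
    constructor
    · by_contra hzp
      push_neg at hzp
      exact h010' ⟨0, p, p+1, hp1, by omega, by rw [hlen]; omega,
        by rw [g1 0 hp1, g3 (p+1) (by omega) (by omega)];
           simp only [Nat.add_sub_cancel]; rw [hl0, hz1 p hzp],
        by rw [g3 (p+1) (by omega) (by omega), g2];
           simp only [Nat.add_sub_cancel]; rw [hz1 p hzp]; omega⟩
    · intro a b hza hap hpb hbn
      by_contra hab
      push_neg at hab
      exact h102' ⟨a, p, b+1, hap, by omega, by rw [hlen]; omega,
        by rw [g2, g1 a hap]; have := hz2 a hza (by omega); omega,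
        by rw [g1 a hap, g3 (b+1) (by omega) (by omega)];
           simpa using hab⟩
  · rintro ⟨hzp, hmm⟩
    refine ⟨hinv', ?_, ?_⟩
    · rintro ⟨i, j, k, hij, hjk, hk, heq, hlt⟩
      rw [hlen] at hk
      rcases lt_trichotomy k p with hkp | rfl | hpk
      · rw [g1 i (by omega), g1 k hkp] at heq
        rw [g1 k hkp, g1 j (by omega)] at hlt
        exact h010 ⟨i, j, k, hij, hjk, by omega, heq, hlt⟩
      · rw [g2, g1 i (by omega)] at heq
        exact hne1 i (by omega) heq
      · rw [g3 k hpk hk] at heq hlt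
        rcases lt_trichotomy j p with hjp | rfl | hpj
        · rw [g1 i (by omega)] at heq
          rw [g1 j hjp] at hlt
          exact h010 ⟨i, j, k-1, hij, by omega, by omega, heq, hlt⟩
        · rw [g1 i (by omega)] at heq
          rw [g2] at hlt
          have h0 : l.getD (k-1) 0 = 0 := by omega
          have := (hziff (k-1) (by omega)).mp h0
          omega
        · rw [g3 j hpj (by omega)] at hlt
          rcases lt_trichotomy i p with hip | rfl | hpi
          · rw [g1 i hip] at heq
            exact h010 ⟨i, j-1, k-1, by omega, by omega, by omega, heq, hlt⟩
          · rw [g2] at heq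
            exact hne1 (k-1) (by omega) heq.symm
          · rw [g3 i hpi (by omega)] at heq
            exact h010 ⟨i-1, j-1, k-1, by omega, by omega, by omega, heq, hlt⟩
    · rintro ⟨i, j, k, hij, hjk, hk, hlt1, hlt2⟩
      rw [hlen] at hk
      rcases lt_trichotomy k p with hkp | rfl | hpk
      · rw [g1 j (by omega), g1 i (by omega)] at hlt1
        rw [g1 i (by omega), g1 k hkp] at hlt2
        exact h102 ⟨i, j, k, hij, hjk, by omega, hlt1, hlt2⟩
      · rw [g2, g1 i (by omega)] at hlt2
        rw [g1 j (by omega), g1 i (by omega)] at hlt1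
        omega
      · rw [g3 k hpk hk] at hlt2
        rcases lt_trichotomy j p with hjp | rfl | hpj
        · rw [g1 j hjp, g1 i (by omega)] at hlt1
          rw [g1 i (by omega)] at hlt2
          exact h102 ⟨i, j, k-1, hij, by omega, by omega, hlt1, hlt2⟩
        · rw [g2, g1 i (by omega)] at hlt1
          rw [g1 i (by omega)] at hlt2
          have hzi : z ≤ i := by
            by_contra hzi
            have := hz1 i (by omega)
            omega
          have := hmm i (k-1) hzi (by omega) (by omega) (by omega)
          omega
        · rw [g3 j hpj (by omega)] at hlt1
          rcases lt_trichotomy i p with hip | rfl | hpi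
          · rw [g1 i hip] at hlt1 hlt2
            exact h102 ⟨i, j-1, k-1, by omega, by omega, by omega, hlt1, hlt2⟩
          · rw [g2] at hlt1 hlt2
            have h0 : l.getD (j-1) 0 = 0 := by omega
            have := (hziff (j-1) (by omega)).mp h0
            omega
          · rw [g3 i hpi (by omega)] at hlt1 hlt2
            exact h102 ⟨i-1, j-1, k-1, by omega, by omega, by omega, hlt1, hlt2⟩
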